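/- Let d ≥ c ≥ 2 and let Φ : 𝒞(ℝ^c) → 𝒞(ℝ^d) be a non-trivial lattice homomorphism. Let S ⊆ ℝ^c be a set consisting of exactly c + 2 points. Then there exists a c-dimensional affine subspace H ⊆ ℝ^d such that Φ({x}) ∩ H ≠ ∅ for every x ∈ S. -/

import Mathlib

open Set

noncomputable section

/-- Euclidean space `ℝ^n`. -/
abbrev E (n : ℕ) := EuclideanSpace ℝ (Fin n)

/-- A convex body of `ℝ^n`: a compact convex subset (possibly empty). -/
def IsBody {n : ℕ} (C : Set (E n)) : Prop := Convex ℝ C ∧ IsCompact C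

/-- `Φ` represents a lattice homomorphism from `𝒞(ℝ^c)` to `𝒞(ℝ^d)`: it maps convex bodies
to convex bodies, and on convex bodies it preserves intersections (the lattice meet) and
convex hulls of unions (the lattice join). -/
def IsLatHom {c d : ℕ} (Φ : Set (E c) → Set (E d)) : Prop :=
  (∀ C, IsBody C → IsBody (Φ C)) ∧
  ∀ C D : Set (E c), IsBody C → IsBody D →
    Φ (C ∩ D) = Φ C ∩ Φ D ∧ Φ (convexHull ℝ (C ∪ D)) = convexHull ℝ (Φ C ∪ Φ D)

/-- `Φ` is non-trivial: it is not constant on convex bodies. -/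
def NonTrivial {c d : ℕ} (Φ : Set (E c) → Set (E d)) : Prop :=
  ∃ C D : Set (E c), IsBody C ∧ IsBody D ∧ Φ C ≠ Φ D

/-- The closed ray emanating from `o` in direction `u`. -/
def Ray {n : ℕ} (o u : E n) : Set (E n) := {p | ∃ t : ℝ, 0 ≤ t ∧ p = o + t • u}

/-- An affine hyperplane of `ℝ^n`: a nonempty affine subspace of dimension `n - 1`. -/
def IsHyperplane {n : ℕ} (H : AffineSubspace ℝ (E n)) : Prop :=
  (H : Set (E n)).Nonempty ∧ Module.finrank ℝ H.direction + 1 = n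

open scoped Classical in
/-- The dimension of a convex set: the dimension of its affine hull, with `sdim ∅ = -1`. -/
def sdim {n : ℕ} (s : Set (E n)) : ℤ :=
  if s = ∅ then -1 else Module.finrank ℝ (affineSpan ℝ s).direction

section AuxLemmas

variable {c d : ℕ} {Φ : Set (E c) → Set (E d)}

lemma body_singleton (x : E c) : IsBody ({x} : Set (E c)) :=
  ⟨convex_singleton x, isCompact_singleton⟩
lemma body_hull_finite {T : Set (E c)} (hT : T.Finite) : IsBody (convexHull ℝ T) :=
  ⟨convex_convexHull ℝ T, hT.isCompact_convexHull ℝ⟩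
lemma body_segment (x y : E c) : IsBody (segment ℝ x y) := by
  rw [← convexHull_pair]
  exact body_hull_finite ((Set.finite_singleton y).insert x)
lemma phi_mono (hΦ : IsLatHom Φ) {C D : Set (E c)} (hC : IsBody C) (hD : IsBody D)
    (h : C ⊆ D) : Φ C ⊆ Φ D := by
  have := (hΦ.2 C D hC hD).1
  rw [Set.inter_eq_left.2 h] at this
  rw [this]; exact Set.inter_subset_right
lemma phi_seg (hΦ : IsLatHom Φ) (x y : E c) :
    Φ (segment ℝ x y) = convexHull ℝ (Φ {x} ∪ Φ {y}) := by
  have := (hΦ.2 {x} {y} (body_singleton x) (body_singleton y)).2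
  rw [Set.singleton_union] at this
  rw [← convexHull_pair, this]

lemma phi_empty (hΦ : IsLatHom Φ) {x₀ : E c} (h0 : Φ {x₀} = ∅) : ∀ m : E c, Φ {m} = ∅ := by
  have hempty : Φ (∅ : Set (E c)) = ∅ := by
    have := (hΦ.2 ∅ {x₀} ⟨convex_empty, isCompact_empty⟩ (body_singleton x₀)).1
    rw [Set.empty_inter, h0, Set.inter_empty] at this
    exact this
  intro m
  rcases eq_or_ne m x₀ with rfl | hne
  · exact h0
  -- the line through x₀ and m
  set f : ℝ →ᵃ[ℝ] E c := AffineMap.lineMap x₀ m with hf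
  have hinj : Function.Injective f := AffineMap.lineMap_injective ℝ (Ne.symm hne)
  have hseg : ∀ a b : ℝ, a ≤ b → segment ℝ (f a) (f b) = f '' Icc a b := by
    intro a b hab
    rw [← image_segment, segment_eq_Icc hab]
  have hf0 : f 0 = x₀ := AffineMap.lineMap_apply_zero x₀ m
  have hf1 : f 1 = m := AffineMap.lineMap_apply_one x₀ m
  -- Φ of a segment from x₀ is Φ of the far endpoint
  have hkey : ∀ p : E c, Φ (segment ℝ x₀ p) = Φ {p} := by
    intro p
    rw [phi_seg hΦ, h0, Set.empty_union,
      ((hΦ.1 _ (body_singleton p)).1).convexHull_eq]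
  -- Φ {m} ⊆ Φ {f (3/2)}
  have hsub : Φ {m} ⊆ Φ {f (3/2)} := by
    have h1 : segment ℝ (f 1) (f (3/2)) = segment ℝ (f 0) (f (3/2)) ∩ segment ℝ (f 1) (f 2) := by
      rw [hseg 1 (3/2) (by norm_num), hseg 0 (3/2) (by norm_num), hseg 1 2 (by norm_num),
        ← Set.image_inter hinj, Set.Icc_inter_Icc]
      norm_num
    have h2 := (hΦ.2 _ _ (body_segment (f 0) (f (3/2))) (body_segment (f 1) (f 2))).1
    rw [← h1] at h2
    have h3 : Φ {m} ⊆ Φ (segment ℝ (f 1) (f (3/2))) := by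
      refine phi_mono hΦ (body_singleton m) (body_segment _ _) ?_
      rw [Set.singleton_subset_iff, ← hf1]
      exact left_mem_segment ℝ _ _
    refine h3.trans ?_
    rw [h2]
    refine Set.inter_subset_left.trans ?_
    rw [hf0] at *
    rw [hkey (f (3/2))]
  -- Φ {m} ∩ Φ (segment (f (3/2)) (f 2)) = ∅
  have hdisj : Φ {m} ∩ Φ (segment ℝ (f (3/2)) (f 2)) = ∅ := by
    have h1 : segment ℝ (f 0) (f 1) ∩ segment ℝ (f (3/2)) (f 2) = ∅ := by
      rw [hseg 0 1 (by norm_num), hseg (3/2) 2 (by norm_num),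
        ← Set.image_inter hinj, Set.Icc_inter_Icc]
      norm_num
    have h2 := (hΦ.2 _ _ (body_segment (f 0) (f 1)) (body_segment (f (3/2)) (f 2))).1
    rw [h1, hempty] at h2
    rw [hf0, hf1] at h2
    rw [hkey m] at h2
    exact h2.symm
  have hsub2 : Φ {f (3/2)} ⊆ Φ (segment ℝ (f (3/2)) (f 2)) := by
    refine phi_mono hΦ (body_singleton _) (body_segment _ _) ?_
    rw [Set.singleton_subset_iff]
    exact left_mem_segment ℝ _ _
  rw [← Set.subset_empty_iff, ← hdisj]
  exact Set.subset_inter (subset_refl _) (hsub.trans hsub2)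

lemma phi_hull (hΦ : IsLatHom Φ) : ∀ T : Finset (E c), T.Nonempty →
    Φ (convexHull ℝ (T : Set (E c))) = convexHull ℝ (⋃ x ∈ (T : Set (E c)), Φ {x}) := by
  intro T hT
  induction hT using Finset.Nonempty.cons_induction with
  | singleton a =>
      simp only [Finset.coe_singleton, convexHull_singleton, Set.biUnion_singleton]
      rw [((hΦ.1 _ (body_singleton a)).1).convexHull_eq]
  | cons a s ha hs ih =>
      have hcoe : ((Finset.cons a s ha : Finset (E c)) : Set (E c)) = {a} ∪ ↑s := by
        rw [Finset.coe_cons, Set.insert_eq]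
      rw [hcoe]
      have h1 : convexHull ℝ ({a} ∪ (s : Set (E c)))
          = convexHull ℝ ({a} ∪ convexHull ℝ (s : Set (E c))) :=
        (convexHull_convexHull_union_right _ _).symm
      rw [h1, (hΦ.2 {a} _ (body_singleton a) (body_hull_finite s.finite_toSet)).2, ih,
        convexHull_convexHull_union_right]
      rw [Set.biUnion_union, Set.biUnion_singleton]

lemma abs_coord_le_norm {n : ℕ} (x : E n) (i : Fin n) : |x i| ≤ ‖x‖ := by
  rw [EuclideanSpace.norm_eq]
  have h1 : x i ^ 2 ≤ ∑ j, ‖x j‖ ^ 2 := by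
    have : x i ^ 2 = ‖x i‖ ^ 2 := by rw [Real.norm_eq_abs, sq_abs]
    rw [this]
    exact Finset.single_le_sum (f := fun j => ‖x j‖ ^ 2)
      (fun j _ => by positivity) (Finset.mem_univ i)
  calc |x i| = Real.sqrt (x i ^ 2) := (Real.sqrt_sq_eq_abs _).symm
  _ ≤ _ := Real.sqrt_le_sqrt h1

lemma phi_all_empty (hΦ : IsLatHom Φ) {x₀ : E c} (h0 : Φ {x₀} = ∅) :
    ∀ C : Set (E c), IsBody C → Φ C = ∅ := by
  have hpt := phi_empty hΦ h0
  intro C hC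
  -- C is bounded
  obtain ⟨R, hR0, hRC⟩ : ∃ R : ℝ, 0 ≤ R ∧ C ⊆ Metric.closedBall 0 R := by
    obtain ⟨R, hR⟩ := hC.2.isBounded.subset_closedBall 0
    exact ⟨max R 0, le_max_right _ _, hR.trans (Metric.closedBall_subset_closedBall (le_max_left _ _))⟩
  set F : Set (E c) := WithLp.toLp 2 '' Set.pi Set.univ (fun _ : Fin c => ({-R, R} : Set ℝ)) with hF
  have hFfin : F.Finite := (Set.Finite.pi (fun _ => (Set.finite_singleton R).insert (-R))).image _
  have hhull : convexHull ℝ F = WithLp.toLp 2 '' Set.pi Set.univ (fun _ => Set.Icc (-R) R) := by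
    have h1 : convexHull ℝ F = WithLp.toLp 2 '' Set.pi Set.univ (fun _ : Fin c => convexHull ℝ ({-R, R} : Set ℝ)) := by
      have hlin : IsLinearMap ℝ (WithLp.toLp 2 : (Fin c → ℝ) → E c) := ⟨fun _ _ => rfl, fun _ _ => rfl⟩
      rw [hF, ← hlin.image_convexHull, convexHull_pi]
    rw [h1]
    congr 2
    ext i
    rw [convexHull_pair, segment_eq_Icc (by linarith)]
  have hCF : C ⊆ convexHull ℝ F := by
    rw [hhull]
    intro x hx
    refine ⟨WithLp.ofLp x, ?_, WithLp.toLp_ofLp (p := 2) x⟩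
    intro i _
    have := abs_coord_le_norm x i
    have hxn : ‖x‖ ≤ R := by
      have := hRC hx
      simpa [Metric.mem_closedBall, dist_zero_right] using this
    constructor <;> [linarith [neg_abs_le (x i)]; linarith [le_abs_self (x i)]]
  have hΦF : Φ (convexHull ℝ F) = ∅ := by
    rcases F.eq_empty_or_nonempty with h | h
    · rw [h, convexHull_empty]
      have := (hΦ.2 ∅ {x₀} ⟨convex_empty, isCompact_empty⟩ (body_singleton x₀)).1
      rw [Set.empty_inter, h0, Set.inter_empty] at this
      exact this
    · have hTfin := hFfin.toFinset
      have hcoe : (hFfin.toFinset : Set (E c)) = F := hFfin.coe_toFinset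
      have hne : hFfin.toFinset.Nonempty := by
        rw [← Finset.coe_nonempty, hcoe]; exact h
      have := phi_hull hΦ hFfin.toFinset hne
      rw [hcoe] at this
      rw [this]
      have : ⋃ x ∈ F, Φ {x} = ∅ := by
        simp only [hpt]
        simp
      rw [this, convexHull_empty]
  have := (hΦ.2 C (convexHull ℝ F) hC (body_hull_finite hFfin)).1
  rw [Set.inter_eq_left.2 hCF, hΦF, Set.inter_empty] at this
  exact this

lemma phi_singleton_nonempty (hΦ : IsLatHom Φ) (hnt : NonTrivial Φ) (x : E c) :
    (Φ {x}).Nonempty := by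
  by_contra h
  rw [Set.not_nonempty_iff_eq_empty] at h
  obtain ⟨C, D, hC, hD, hCD⟩ := hnt
  exact hCD ((phi_all_empty hΦ h C hC).trans (phi_all_empty hΦ h D hD).symm)

open Submodule in
lemma selection {T : Finset (E c)} {K : E c → Set (E d)}
    (hK : ∀ x ∈ T, Convex ℝ (K x) ∧ (K x).Nonempty) {z : E d}
    (hz : z ∈ convexHull ℝ (⋃ x ∈ (T : Set (E c)), K x)) :
    ∃ y : E c → E d, (∀ x ∈ T, y x ∈ K x) ∧ z ∈ convexHull ℝ (y '' (T : Set (E c))) := by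
  classical
  induction T using Finset.cons_induction generalizing z with
  | empty => simp at hz
  | cons a s ha ih =>
      have hcoe : ((Finset.cons a s ha : Finset (E c)) : Set (E c)) = {a} ∪ ↑s := by
        rw [Finset.coe_cons, Set.insert_eq]
      rw [hcoe] at hz
      rw [Set.biUnion_union, Set.biUnion_singleton] at hz
      have hKa := hK a (Finset.mem_cons_self a s)
      rcases s.eq_empty_or_nonempty with rfl | hs
      · simp only [Finset.coe_empty, Set.mem_empty_iff_false, Set.iUnion_of_empty,
          Set.iUnion_empty, Set.union_empty] at hz
        rw [hKa.1.convexHull_eq] at hz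
        refine ⟨fun _ => z, ?_, ?_⟩
        · intro x hx
          rcases Finset.mem_cons.1 hx with rfl | hx
          · exact hz
          · simp at hx
        · rw [hcoe]
          simp only [Finset.coe_empty, Set.union_empty, Set.image_singleton]
          exact subset_convexHull ℝ _ rfl
      · have hUne : (⋃ x ∈ (s : Set (E c)), K x).Nonempty := by
          obtain ⟨b, hb⟩ := hs
          obtain ⟨w, hw⟩ := (hK b (Finset.mem_cons_of_mem hb)).2
          exact ⟨w, Set.mem_biUnion hb hw⟩
        rw [convexHull_union hKa.2 hUne, hKa.1.convexHull_eq, mem_convexJoin] at hz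
        obtain ⟨u, hu, v, hv, hzseg⟩ := hz
        obtain ⟨y, hy1, hy2⟩ := ih (fun x hx => hK x (Finset.mem_cons_of_mem hx)) hv
        refine ⟨Function.update y a u, ?_, ?_⟩
        · intro x hx
          rcases Finset.mem_cons.1 hx with rfl | hx2
          · rw [Function.update_self]; exact hu
          · rw [Function.update_of_ne (by rintro rfl; exact ha hx2)]
            exact hy1 x hx2
        · have himg : Function.update y a u '' ((Finset.cons a s ha : Finset (E c)) : Set (E c))
              = insert u (y '' (s : Set (E c))) := by
            rw [hcoe, Set.image_union, Set.image_singleton, Function.update_self]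
            congr 1
            apply Set.image_congr
            intro x hx
            rw [Function.update_of_ne (by rintro rfl; exact ha hx)]
          rw [himg]
          have hsub : segment ℝ u v ⊆ convexHull ℝ (insert u (y '' (s : Set (E c)))) := by
            apply (convex_convexHull ℝ _).segment_subset
            · exact subset_convexHull ℝ _ (Set.mem_insert u _)
            · exact convexHull_mono (Set.subset_insert _ _) hy2
          exact hsub hzseg

open Submodule in
open scoped Classical in
lemma relation_lemma {P : Finset (E d)} {z : E d} (hz : z ∈ convexHull ℝ (P : Set (E d))) :
    ∃ p₀ ∈ P, ∀ p ∈ P, p - z ∈ span ℝ ((fun q => q - z) '' ((P.erase p₀ : Finset (E d)) : Set (E d))) := by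
  rw [Finset.convexHull_eq] at hz
  obtain ⟨w, hw0, hw1, hwz⟩ := hz
  have hzsum : z = ∑ p ∈ P, w p • p := by
    rw [← hwz, Finset.centerMass_eq_of_sum_1 _ _ hw1]
    rfl
  have hrel : ∑ p ∈ P, w p • (p - z) = 0 := by
    have : ∑ p ∈ P, w p • (p - z) = (∑ p ∈ P, w p • p) - (∑ p ∈ P, w p) • z := by
      rw [Finset.sum_smul]
      rw [← Finset.sum_sub_distrib]
      congr 1
      ext p
      rw [smul_sub]
    rw [this, hw1, one_smul, ← hzsum, sub_self]
  obtain ⟨p₀, hp₀P, hp₀⟩ := Finset.exists_ne_zero_of_sum_ne_zero (by rw [hw1]; norm_num : ∑ p ∈ P, w p ≠ 0)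
  refine ⟨p₀, hp₀P, ?_⟩
  have hp0span : p₀ - z ∈ span ℝ ((fun q => q - z) '' ((P.erase p₀ : Finset (E d)) : Set (E d))) := by
    have hsplit : w p₀ • (p₀ - z) + ∑ q ∈ P.erase p₀, w q • (q - z) = 0 := by
      rw [Finset.add_sum_erase P (fun q => w q • (q - z)) hp₀P]; exact hrel
    have heq : p₀ - z = (w p₀)⁻¹ • (w p₀ • (p₀ - z)) := by
      rw [smul_smul, inv_mul_cancel₀ hp₀, one_smul]
    rw [heq, eq_neg_of_add_eq_zero_left hsplit]
    exact smul_mem _ _ (neg_mem (sum_mem fun q hq =>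
      smul_mem _ _ (subset_span ⟨q, Finset.mem_coe.2 hq, rfl⟩)))
  intro p hp
  rcases eq_or_ne p p₀ with rfl | hne
  · exact hp0span
  · exact subset_span ⟨p, Finset.mem_erase.2 ⟨hne, hp⟩, rfl⟩

open Submodule Module in
lemma extend_submodule {V : Type*} [NormedAddCommGroup V] [NormedSpace ℝ V] [FiniteDimensional ℝ V] :
    ∀ (n : ℕ) (W : Submodule ℝ V), finrank ℝ W + n ≤ finrank ℝ V →
      ∃ W' : Submodule ℝ V, W ≤ W' ∧ finrank ℝ W' = finrank ℝ W + n := by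
  intro n
  induction n with
  | zero => exact fun W _ => ⟨W, le_refl W, rfl⟩
  | succ n ih =>
      intro W hW
      have hWne : W ≠ ⊤ := by
        intro h
        rw [h, finrank_top] at hW
        omega
      obtain ⟨v, hv⟩ : ∃ v, v ∉ W := by
        by_contra h
        push_neg at h
        exact hWne (eq_top_iff.2 fun x _ => h x)
      have hv0 : v ≠ 0 := fun h => hv (h ▸ W.zero_mem)
      have hinf : W ⊓ span ℝ {v} = ⊥ := by
        rw [eq_bot_iff]
        rintro x ⟨hxW, hxv⟩
        obtain ⟨a, rfl⟩ := mem_span_singleton.1 hxv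
        rcases eq_or_ne a 0 with rfl | ha
        · simp
        · exact absurd (by simpa [smul_smul, inv_mul_cancel₀ ha] using W.smul_mem a⁻¹ hxW) hv
      have hsup : finrank ℝ ↥(W ⊔ span ℝ {v}) = finrank ℝ W + 1 := by
        have := Submodule.finrank_sup_add_finrank_inf_eq W (span ℝ {v})
        rw [hinf, finrank_bot, finrank_span_singleton hv0] at this
        omega
      obtain ⟨W', hle, hrank⟩ := ih (W ⊔ span ℝ {v}) (by rw [hsup]; omega)
      exact ⟨W', le_trans le_sup_left hle, by rw [hrank, hsup]; omega⟩

lemma body_inter {C D : Set (E c)} (hC : IsBody C) (hD : IsBody D) : IsBody (C ∩ D) :=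
  ⟨hC.1.inter hD.1, hC.2.inter_right hD.2.isClosed⟩


end AuxLemmas

open Submodule Module in
/-- Preservation of affine dependence: for a non-trivial lattice homomorphism
`𝒞(ℝ^c) → 𝒞(ℝ^d)`, `d ≥ c ≥ 2`, and any `(c+2)`-point set `S` there is a `c`-dimensional
affine subspace of `ℝ^d` meeting every `Φ({x})`, `x ∈ S`. -/
theorem stmt_12 (c d : ℕ) (hc : 2 ≤ c) (hcd : c ≤ d) (Φ : Set (E c) → Set (E d))
    (hΦ : IsLatHom Φ) (hnt : NonTrivial Φ)
    (S : Set (E c)) (hS : S.Finite) (hcard : S.ncard = c + 2) :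
    ∃ H : AffineSubspace ℝ (E d), (H : Set (E d)).Nonempty ∧
      Module.finrank ℝ H.direction = c ∧
      ∀ x ∈ S, (Φ {x} ∩ (H : Set (E d))).Nonempty := by
  classical
  haveI := hS.fintype
  have hfr : Module.finrank ℝ (E c) = c := finrank_euclideanSpace_fin
  have hcardS : Fintype.card S = c + 2 := by
    rw [← Nat.card_eq_fintype_card, Nat.card_coe_set_eq, hcard]
  have hdep : ¬ AffineIndependent ℝ ((↑) : S → E c) := by
    intro hind
    have h1 : Fintype.card S ≤ finrank ℝ (vectorSpan ℝ (Set.range ((↑) : S → E c))) + 1 :=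
      hind.card_le_finrank_succ
    have h2 := Submodule.finrank_le (vectorSpan ℝ (Set.range ((↑) : S → E c)))
    rw [hfr] at h2
    omega
  obtain ⟨I, p, hp⟩ := Convex.radon_partition (𝕜 := ℝ) hdep
  set A : Set (E c) := ((↑) : S → E c) '' I with hA
  set B : Set (E c) := ((↑) : S → E c) '' Iᶜ with hB
  have hpA : p ∈ convexHull ℝ A := hp.1
  have hpB : p ∈ convexHull ℝ B := hp.2
  have hAS : A ⊆ S := by rintro _ ⟨⟨x, hx⟩, _, rfl⟩; exact hx
  have hBS : B ⊆ S := by rintro _ ⟨⟨x, hx⟩, _, rfl⟩; exact hx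
  have hAfin : A.Finite := hS.subset hAS
  have hBfin : B.Finite := hS.subset hBS
  have hABS : A ∪ B = S := by
    rw [hA, hB, ← Set.image_union, Set.union_compl_self, Set.image_univ, Subtype.range_coe]
  have hABdisj : Disjoint A B :=
    Set.disjoint_image_of_injective Subtype.coe_injective disjoint_compl_right
  have hAne : A.Nonempty := (convexHull_nonempty_iff.1 ⟨p, hpA⟩ : A.Nonempty)
  have hBne : B.Nonempty := (convexHull_nonempty_iff.1 ⟨p, hpB⟩ : B.Nonempty)
  have hcardAB : A.ncard + B.ncard = c + 2 := by
    rw [← Set.ncard_union_eq hABdisj hAfin hBfin, hABS, hcard]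
  have hne : ∀ x : E c, (Φ {x}).Nonempty := phi_singleton_nonempty hΦ hnt
  have hcvx : ∀ x : E c, Convex ℝ (Φ {x}) := fun x => (hΦ.1 _ (body_singleton x)).1
  -- obtain the common point z
  have hbodyA : IsBody (convexHull ℝ A) := body_hull_finite hAfin
  have hbodyB : IsBody (convexHull ℝ B) := body_hull_finite hBfin
  have hmono : Φ {p} ⊆ Φ (convexHull ℝ A ∩ convexHull ℝ B) :=
    phi_mono hΦ (body_singleton p) (body_inter hbodyA hbodyB)
      (Set.singleton_subset_iff.2 ⟨hpA, hpB⟩)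
  obtain ⟨z, hz⟩ := (hne p).mono hmono
  rw [(hΦ.2 _ _ hbodyA hbodyB).1] at hz
  -- hull formulas and selection
  set TA := hAfin.toFinset with hTA
  set TB := hBfin.toFinset with hTB
  have hTAco : (TA : Set (E c)) = A := hAfin.coe_toFinset
  have hTBco : (TB : Set (E c)) = B := hBfin.coe_toFinset
  have hTAne : TA.Nonempty := by rw [← Finset.coe_nonempty, hTAco]; exact hAne
  have hTBne : TB.Nonempty := by rw [← Finset.coe_nonempty, hTBco]; exact hBne
  have hΦA : Φ (convexHull ℝ A) = convexHull ℝ (⋃ x ∈ (TA : Set (E c)), Φ {x}) := by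
    rw [← hTAco]; exact phi_hull hΦ TA hTAne
  have hΦB : Φ (convexHull ℝ B) = convexHull ℝ (⋃ x ∈ (TB : Set (E c)), Φ {x}) := by
    rw [← hTBco]; exact phi_hull hΦ TB hTBne
  obtain ⟨yA, hyA1, hyA2⟩ := selection (T := TA) (K := fun x => Φ {x})
    (fun x _ => ⟨hcvx x, hne x⟩) (hΦA ▸ hz.1)
  obtain ⟨yB, hyB1, hyB2⟩ := selection (T := TB) (K := fun x => Φ {x})
    (fun x _ => ⟨hcvx x, hne x⟩) (hΦB ▸ hz.2)
  set P := TA.image yA with hP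
  set Q := TB.image yB with hQ
  have hzP : z ∈ convexHull ℝ (P : Set (E d)) := by rw [hP, Finset.coe_image]; exact hyA2
  have hzQ : z ∈ convexHull ℝ (Q : Set (E d)) := by rw [hQ, Finset.coe_image]; exact hyB2
  obtain ⟨p₀, hp₀, hPspan⟩ := relation_lemma hzP
  obtain ⟨q₀, hq₀, hQspan⟩ := relation_lemma hzQ
  set RR := (P.erase p₀) ∪ (Q.erase q₀) with hRR
  set W₀ := span ℝ ((fun q => q - z) '' (RR : Set (E d))) with hW₀
  have hPW : ∀ r ∈ P, r - z ∈ W₀ := by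
    intro r hr
    refine span_mono (Set.image_mono ?_) (hPspan r hr)
    rw [hRR, Finset.coe_union]
    exact Set.subset_union_left
  have hQW : ∀ r ∈ Q, r - z ∈ W₀ := by
    intro r hr
    refine span_mono (Set.image_mono ?_) (hQspan r hr)
    rw [hRR, Finset.coe_union]
    exact Set.subset_union_right
  have hcardP : P.card ≤ A.ncard := by
    rw [Set.ncard_eq_toFinset_card A hAfin]
    exact Finset.card_image_le
  have hcardQ : Q.card ≤ B.ncard := by
    rw [Set.ncard_eq_toFinset_card B hBfin]
    exact Finset.card_image_le
  have h1P : 1 ≤ P.card := Finset.card_pos.2 ⟨p₀, hp₀⟩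
  have h1Q : 1 ≤ Q.card := Finset.card_pos.2 ⟨q₀, hq₀⟩
  have hRRcard : RR.card ≤ c := by
    have hle := Finset.card_union_le (P.erase p₀) (Q.erase q₀)
    rw [Finset.card_erase_of_mem hp₀, Finset.card_erase_of_mem hq₀, ← hRR] at hle
    omega
  have hW₀rank : finrank ℝ W₀ ≤ c := by
    have himg : (fun q => q - z) '' (RR : Set (E d))
        = ((RR.image (fun q => q - z) : Finset (E d)) : Set (E d)) := (Finset.coe_image).symm
    rw [hW₀, himg]
    exact le_trans (finrank_span_finset_le_card _) (le_trans Finset.card_image_le hRRcard)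
  have hfrd : finrank ℝ (E d) = d := finrank_euclideanSpace_fin
  obtain ⟨W, hW₀W, hWrank⟩ := extend_submodule (c - finrank ℝ W₀) W₀ (by rw [hfrd]; omega)
  have hWc : finrank ℝ W = c := by rw [hWrank]; omega
  refine ⟨AffineSubspace.mk' z W, ⟨z, AffineSubspace.self_mem_mk' z W⟩, ?_, ?_⟩
  · rw [AffineSubspace.direction_mk']; exact hWc
  · intro x hxS
    have hxAB : x ∈ A ∪ B := hABS ▸ hxS
    rcases hxAB with hxA | hxB
    · have hxTA : x ∈ TA := hAfin.mem_toFinset.2 hxA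
      refine ⟨yA x, hyA1 x hxTA, ?_⟩
      have hyP : yA x ∈ P := Finset.mem_image_of_mem yA hxTA
      exact AffineSubspace.mem_mk'.2 (hW₀W (hPW _ hyP))
    · have hxTB : x ∈ TB := hBfin.mem_toFinset.2 hxB
      refine ⟨yB x, hyB1 x hxTB, ?_⟩
      have hyQ : yB x ∈ Q := Finset.mem_image_of_mem yB hxTB
      exact AffineSubspace.mem_mk'.2 (hW₀W (hQW _ hyQ))
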